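/- Let f : ℝⁿ → GL_k(ℝ) be smooth with |f(x)⁻¹ ∇f(x)| ≤ λ for all x. Then for all x, y with |x − y| ≤ 1/(2λ), one has |f(x)⁻¹ f(y) − I_k| ≤ 2λ|x − y|. -/

import Mathlib

open Set

/-- Frobenius norm of a real matrix. -/
noncomputable def frob {k l : ℕ} (M : Matrix (Fin k) (Fin l) ℝ) : ℝ :=
  Real.sqrt (∑ i, ∑ j, (M i j) ^ 2)


noncomputable def toE {k : ℕ} (M : Matrix (Fin k) (Fin k) ℝ) :
    EuclideanSpace ℝ (Fin k × Fin k) :=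
  (PiLp.continuousLinearEquiv 2 ℝ (fun _ : Fin k × Fin k => ℝ)).symm (fun p => M p.1 p.2)

lemma toE_apply {k : ℕ} (M : Matrix (Fin k) (Fin k) ℝ) (p : Fin k × Fin k) :
    toE M p = M p.1 p.2 := rfl

lemma frob_toE {k : ℕ} (M : Matrix (Fin k) (Fin k) ℝ) : frob M = ‖toE M‖ := by
  rw [EuclideanSpace.norm_eq, frob]
  congr 1
  rw [Fintype.sum_prod_type]
  congr 1; funext i; congr 1; funext j
  rw [toE_apply, Real.norm_eq_abs, sq_abs]

lemma frob_nonneg {k l : ℕ} (M : Matrix (Fin k) (Fin l) ℝ) : 0 ≤ frob M :=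
  Real.sqrt_nonneg _

lemma toE_add {k : ℕ} (A B : Matrix (Fin k) (Fin k) ℝ) : toE (A + B) = toE A + toE B := rfl

lemma frob_add_le {k : ℕ} (A B : Matrix (Fin k) (Fin k) ℝ) :
    frob (A + B) ≤ frob A + frob B := by
  rw [frob_toE, frob_toE, frob_toE, toE_add]; exact norm_add_le _ _

lemma frob_mul_le {k : ℕ} (A B : Matrix (Fin k) (Fin k) ℝ) :
    frob (A * B) ≤ frob A * frob B := by
  rw [frob, frob, frob, ← Real.sqrt_mul (by positivity)]
  apply Real.sqrt_le_sqrt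
  calc ∑ i, ∑ j, ((A * B) i j) ^ 2
      ≤ ∑ i, ∑ j, (∑ m, A i m ^ 2) * (∑ m, B m j ^ 2) := by
        refine Finset.sum_le_sum fun i _ => Finset.sum_le_sum fun j _ => ?_
        rw [Matrix.mul_apply]
        exact Finset.sum_mul_sq_le_sq_mul_sq _ _ _
    _ = (∑ i, ∑ m, A i m ^ 2) * (∑ j, ∑ m, B m j ^ 2) := by
        rw [Finset.sum_mul_sum Finset.univ Finset.univ (fun i => ∑ m, A i m ^ 2) (fun j => ∑ m, B m j ^ 2)]
    _ = (∑ i, ∑ m, A i m ^ 2) * (∑ m, ∑ j, B m j ^ 2) := by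
        congr 1
        exact Finset.sum_comm

lemma exp_sub_one_le_two_mul {a : ℝ} (h0 : 0 ≤ a) (h : a ≤ 1 / 2) :
    Real.exp a - 1 ≤ 2 * a := by
  have h2 : 1 - a ≤ Real.exp (-a) := by linarith [Real.add_one_le_exp (-a)]
  have h3 : Real.exp a * Real.exp (-a) = 1 := by rw [← Real.exp_add]; simp
  have h4 := mul_le_mul_of_nonneg_left h2 (Real.exp_pos a).le
  nlinarith [Real.exp_pos a, mul_nonneg h0 (by linarith : (0:ℝ) ≤ 1 - 2 * a)]

/-- If `f : ℝⁿ → GL_k(ℝ)` is smooth with `|f(x)⁻¹ ∂_v f(x)| ≤ λ |v|` everywhere,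
then `|f(x)⁻¹ f(y) − I| ≤ 2 λ |x − y|` whenever `|x − y| ≤ 1/(2λ)`. -/
theorem matrix_mvt (n k : ℕ) (lam : ℝ) (hlam : 0 < lam)
    (f : EuclideanSpace ℝ (Fin n) → Matrix (Fin k) (Fin k) ℝ)
    (Df : EuclideanSpace ℝ (Fin n) → EuclideanSpace ℝ (Fin n) → Matrix (Fin k) (Fin k) ℝ)
    (hderiv : ∀ x v i j, HasDerivAt (fun t : ℝ => f (x + t • v) i j) (Df x v i j) 0)
    (hcont : ∀ v i j, Continuous fun x => Df x v i j)
    (hinv : ∀ x, IsUnit (f x))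
    (hbound : ∀ x v, frob ((f x)⁻¹ * Df x v) ≤ lam * ‖v‖) :
    ∀ x y, dist x y ≤ 1 / (2 * lam) →
      frob ((f x)⁻¹ * f y - 1) ≤ 2 * lam * dist x y := by
  intro x y hxy
  set v : EuclideanSpace ℝ (Fin n) := y - x with hv
  have hdist : dist x y = ‖v‖ := by
    rw [dist_eq_norm, hv, ← norm_neg]; congr 1; abel
  set a : ℝ := lam * ‖v‖ with ha
  have ha0 : 0 ≤ a := mul_nonneg hlam.le (norm_nonneg _)
  have ha2 : a ≤ 1 / 2 := by
    rw [hdist] at hxy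
    have := mul_le_mul_of_nonneg_left hxy hlam.le
    rw [ha]
    calc lam * ‖v‖ ≤ lam * (1 / (2 * lam)) := this
      _ = 1 / 2 := by field_simp
  have hfinv : ∀ z, (f z)⁻¹ * f z = 1 := fun z =>
    Matrix.nonsing_inv_mul _ ((Matrix.isUnit_iff_isUnit_det _).1 (hinv z))
  have hfinv' : ∀ z, f z * (f z)⁻¹ = 1 := fun z =>
    Matrix.mul_nonsing_inv _ ((Matrix.isUnit_iff_isUnit_det _).1 (hinv z))
  -- entrywise derivative along the line, at any time t
  have hline : ∀ (t : ℝ) i j,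
      HasDerivAt (fun s : ℝ => f (x + s • v) i j) (Df (x + t • v) v i j) t := by
    intro t i j
    have h0 : HasDerivAt (fun s : ℝ => f (x + t • v + s • v) i j)
        (Df (x + t • v) v i j) (t - t) := by
      rw [sub_self]; exact hderiv _ v i j
    have hsub : HasDerivAt (fun s : ℝ => s - t) 1 t := (hasDerivAt_id t).sub_const t
    have h1 := HasDerivAt.comp (h := fun s : ℝ => s - t) t h0 hsub
    have heq : ((fun s : ℝ => f (x + t • v + s • v) i j) ∘ fun s : ℝ => s - t)
        = fun s : ℝ => f (x + s • v) i j := by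
      funext s
      show f (x + t • v + (s - t) • v) i j = f (x + s • v) i j
      have hx : x + t • v + (s - t) • v = x + s • v := by rw [sub_smul]; abel
      rw [hx]
    rw [heq, mul_one] at h1
    exact h1
  -- entrywise derivative of (f x)⁻¹ * f (x + t • v) - 1
  have hprod : ∀ (t : ℝ) i j,
      HasDerivAt (fun s : ℝ => ((f x)⁻¹ * f (x + s • v) - 1) i j)
        (((f x)⁻¹ * Df (x + t • v) v) i j) t := by
    intro t i j
    have h1 : HasDerivAt (fun s : ℝ => ∑ m, (f x)⁻¹ i m * f (x + s • v) m j)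
        (∑ m, (f x)⁻¹ i m * Df (x + t • v) v m j) t :=
      HasDerivAt.fun_sum fun m _ => (hline t m j).const_mul _
    have h2 : (fun s : ℝ => ((f x)⁻¹ * f (x + s • v) - 1) i j)
        = fun s : ℝ => (∑ m, (f x)⁻¹ i m * f (x + s • v) m j) - (1 : Matrix (Fin k) (Fin k) ℝ) i j := by
      funext s
      rw [Matrix.sub_apply, Matrix.mul_apply]
    rw [h2, Matrix.mul_apply]
    exact h1.sub_const _
  -- set up the Euclidean-valued curve
  set G : ℝ → EuclideanSpace ℝ (Fin k × Fin k) :=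
    fun t => toE ((f x)⁻¹ * f (x + t • v) - 1) with hG
  set G' : ℝ → EuclideanSpace ℝ (Fin k × Fin k) :=
    fun t => toE ((f x)⁻¹ * Df (x + t • v) v) with hG'
  have hGderiv : ∀ t : ℝ, HasDerivAt G (G' t) t := by
    intro t
    have hpi : HasDerivAt (fun s : ℝ => fun p : Fin k × Fin k =>
        ((f x)⁻¹ * f (x + s • v) - 1) p.1 p.2)
        (fun p : Fin k × Fin k => ((f x)⁻¹ * Df (x + t • v) v) p.1 p.2) t :=
      hasDerivAt_pi.2 fun p => hprod t p.1 p.2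
    exact ((PiLp.continuousLinearEquiv 2 ℝ
      (fun _ : Fin k × Fin k => ℝ)).symm.toContinuousLinearMap.hasFDerivAt.comp_hasDerivAt t hpi)
  have hGcont : ContinuousOn G (Icc (0:ℝ) 1) :=
    (continuous_iff_continuousAt.2 fun t => (hGderiv t).continuousAt).continuousOn
  have hG0 : ‖G 0‖ ≤ 0 := by
    have : G 0 = 0 := by
      rw [hG]
      simp only [zero_smul, add_zero, hfinv x, sub_self]
      rfl
    rw [this, norm_zero]
  have hGbound : ∀ t ∈ Ico (0:ℝ) 1, ‖G' t‖ ≤ a * ‖G t‖ + a := by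
    intro t _
    have hfr : ‖G' t‖ = frob ((f x)⁻¹ * Df (x + t • v) v) := (frob_toE _).symm
    have hfrG : ‖G t‖ = frob ((f x)⁻¹ * f (x + t • v) - 1) := (frob_toE _).symm
    rw [hfr, hfrG]
    set z := x + t • v with hz
    have hdecomp : (f x)⁻¹ * Df z v
        = ((f x)⁻¹ * f z - 1) * ((f z)⁻¹ * Df z v) + ((f z)⁻¹ * Df z v) := by
      rw [sub_mul, one_mul, sub_add_cancel, mul_assoc, ← mul_assoc (f z), hfinv' z, one_mul]
    calc frob ((f x)⁻¹ * Df z v)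
        ≤ frob (((f x)⁻¹ * f z - 1) * ((f z)⁻¹ * Df z v)) + frob ((f z)⁻¹ * Df z v) := by
          rw [hdecomp]; exact frob_add_le _ _
      _ ≤ frob ((f x)⁻¹ * f z - 1) * frob ((f z)⁻¹ * Df z v) + frob ((f z)⁻¹ * Df z v) :=
          add_le_add_left (frob_mul_le _ _) _
      _ ≤ frob ((f x)⁻¹ * f z - 1) * a + a := by
          have hb := hbound z v
          exact add_le_add (mul_le_mul_of_nonneg_left hb (frob_nonneg _)) hb
      _ = a * frob ((f x)⁻¹ * f z - 1) + a := by ring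
  have key := norm_le_gronwallBound_of_norm_deriv_right_le hGcont
    (fun t ht => (hGderiv t).hasDerivWithinAt) hG0 hGbound 1 (by norm_num)
  have h1v : x + (1:ℝ) • v = y := by rw [one_smul, hv]; abel
  have hGy : frob ((f x)⁻¹ * f y - 1) = ‖G 1‖ := by
    rw [hG]; simp only [h1v]; exact frob_toE _
  rw [hdist, hGy]
  have h2a : 2 * lam * ‖v‖ = 2 * a := by rw [ha]; ring
  rw [h2a]
  refine key.trans ?_
  rcases eq_or_lt_of_le ha0 with h | h
  · rw [← h]
    simp [gronwallBound_K0]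
  · rw [sub_zero, gronwallBound_of_K_ne_0 h.ne']
    show (0:ℝ) * Real.exp (a * 1) + a / a * (Real.exp (a * 1) - 1) ≤ 2 * a
    have heq : (0:ℝ) * Real.exp (a * 1) + a / a * (Real.exp (a * 1) - 1) = Real.exp a - 1 := by
      field_simp; ring
    rw [heq]
    exact exp_sub_one_le_two_mul ha0 ha2
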